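/- arXiv:1009.0222 — 2 statements merged into one kernel-verified Lean document; each statement's English description precedes it below -/
import Mathlib

section
/- Let p > 1, λ > 0, q locally integrable, and let y be a nontrivial solution of -( (y')^{(p-1)} )' = (p-1)(λ - q(x)) y^{(p-1)}. Define the generalized Prüfer variables r(x) > 0 and θ(x) by y(x) = r(x) S_p(λ^{1/p} θ(x)) and y'(x) = λ^{1/p} r(x) S_p'(λ^{1/p} θ(x)). Then θ satisfies the first-order equation θ'(x) = 1 - (q(x)/λ) |S_p(λ^{1/p} θ(x))|^p. -/
open MeasureTheory Real Set Filter
open scoped Topology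

/-- The signed power `f^{(r)} = |f|^r sgn f`. -/
noncomputable def sgnPow (r x : ℝ) : ℝ := |x| ^ r * Real.sign x

lemma sgnPow_pos_mul {c : ℝ} (hc : 0 < c) (e x : ℝ) :
    sgnPow e (c * x) = c ^ e * sgnPow e x := by
  unfold sgnPow
  rcases lt_trichotomy x 0 with hx | hx | hx
  · rw [Real.sign_of_neg hx, Real.sign_of_neg (mul_neg_of_pos_of_neg hc hx),
      abs_mul, abs_of_pos hc, Real.mul_rpow hc.le (abs_nonneg x)]
    ring
  · simp [hx, Real.sign_zero]
  · rw [Real.sign_of_pos hx, Real.sign_of_pos (mul_pos hc hx),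
      abs_mul, abs_of_pos hc, Real.mul_rpow hc.le (abs_nonneg x)]
    ring

lemma mul_sgnPow {e : ℝ} (he : 0 < e) (x : ℝ) : x * sgnPow e x = |x| ^ (e + 1) := by
  unfold sgnPow
  rcases lt_trichotomy x 0 with hx | hx | hx
  · rw [Real.sign_of_neg hx, Real.rpow_add_one (abs_ne_zero.2 hx.ne) e, abs_of_neg hx]
    ring
  · simp [hx, Real.zero_rpow (by positivity : e + 1 ≠ 0)]
  · rw [Real.sign_of_pos hx, Real.rpow_add_one (abs_ne_zero.2 hx.ne') e, abs_of_pos hx]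
    ring

lemma abs_sgnPow {e : ℝ} (he : e ≠ 0) (x : ℝ) : |sgnPow e x| = |x| ^ e := by
  unfold sgnPow
  rcases lt_trichotomy x 0 with hx | hx | hx
  · rw [Real.sign_of_neg hx, abs_mul]
    simp [abs_of_nonneg (Real.rpow_nonneg (abs_nonneg x) e)]
  · simp [hx, Real.zero_rpow he]
  · rw [Real.sign_of_pos hx, abs_mul]
    simp [abs_of_nonneg (Real.rpow_nonneg (abs_nonneg x) e)]

lemma sgnPow_inv {e : ℝ} (he : 0 < e) (x : ℝ) : sgnPow e⁻¹ (sgnPow e x) = x := by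
  unfold sgnPow
  rcases lt_trichotomy x 0 with hx | hx | hx
  · rw [Real.sign_of_neg hx]
    have h1 : |x| ^ e * (-1 : ℝ) = -(|x| ^ e) := by ring
    have h2 : (0:ℝ) < |x| ^ e := Real.rpow_pos_of_pos (abs_pos.2 hx.ne) e
    rw [h1, abs_neg, abs_of_pos h2, Real.sign_of_neg (neg_neg_iff_pos.2 h2),
      Real.rpow_rpow_inv (abs_nonneg x) he.ne', abs_of_neg hx]
    ring
  · simp [hx, Real.sign_zero]
  · rw [Real.sign_of_pos hx]
    have h2 : (0:ℝ) < |x| ^ e := Real.rpow_pos_of_pos (abs_pos.2 hx.ne') e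
    rw [mul_one, abs_of_pos h2, Real.sign_of_pos h2,
      Real.rpow_rpow_inv (abs_nonneg x) he.ne', abs_of_pos hx]
    ring

lemma sgnPow_eq_abs_rpow_mul {e : ℝ} (x : ℝ) : sgnPow (e - 1) x = |x| ^ (e - 2) * x := by
  unfold sgnPow
  rcases lt_trichotomy x 0 with hx | hx | hx
  · rw [Real.sign_of_neg hx,
      show e - 1 = (e - 2) + 1 by ring, Real.rpow_add_one (abs_ne_zero.2 hx.ne),
      abs_of_neg hx]
    ring
  · simp [hx]
  · rw [Real.sign_of_pos hx,
      show e - 1 = (e - 2) + 1 by ring, Real.rpow_add_one (abs_ne_zero.2 hx.ne'),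
      abs_of_pos hx]
    ring

lemma hasDerivAt_abs_rpow' {e : ℝ} (he : 1 < e) (x : ℝ) :
    HasDerivAt (fun t : ℝ => |t| ^ e) (e * sgnPow (e - 1) x) x := by
  have h := hasDerivAt_abs_rpow x he
  convert h using 1
  rw [sgnPow_eq_abs_rpow_mul]
  ring

lemma pyth_identity {p : ℝ} (hp : 1 < p) (S : ℝ → ℝ) (hSdiff : Differentiable ℝ S)
    (hSODE : ∀ x : ℝ, HasDerivAt (fun t => sgnPow (p - 1) (deriv S t))
      (-((p - 1) * sgnPow (p - 1) (S x))) x)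
    (hS0 : S 0 = 0) (hS'0 : deriv S 0 = 1) :
    ∀ t : ℝ, |S t| ^ p + |deriv S t| ^ p = 1 := by
  have hp1 : (0:ℝ) < p - 1 := by linarith
  set p' : ℝ := p / (p - 1) with hp'def
  have hp' : 1 < p' := (one_lt_div hp1).2 (by linarith)
  clear_value p'
  set g : ℝ → ℝ := fun t => sgnPow (p - 1) (deriv S t) with hgdef
  have habs_g : ∀ t, |g t| ^ p' = |deriv S t| ^ p := by
    intro t
    rw [hgdef, abs_sgnPow hp1.ne', ← Real.rpow_mul (abs_nonneg _)]
    rw [hp'def]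
    field_simp
  have hEderiv : ∀ t, HasDerivAt (fun u => |S u| ^ p + |g u| ^ p') 0 t := by
    intro t
    have h1 : HasDerivAt (fun u => |S u| ^ p) (p * sgnPow (p - 1) (S t) * deriv S t) t := by
      have := (hasDerivAt_abs_rpow' hp (S t)).comp t (hSdiff t).hasDerivAt
      simpa [Function.comp_def, mul_assoc] using this
    have h2 : HasDerivAt (fun u => |g u| ^ p')
        (p' * sgnPow (p' - 1) (g t) * -((p - 1) * sgnPow (p - 1) (S t))) t := by
      have := (hasDerivAt_abs_rpow' hp' (g t)).comp t (hSODE t)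
      simpa [Function.comp_def, mul_assoc] using this
    have hkey : sgnPow (p' - 1) (g t) = deriv S t := by
      have he : p' - 1 = (p - 1)⁻¹ := by
        rw [hp'def]
        rw [div_sub_one hp1.ne', inv_eq_one_div]
        congr 1
        ring
      rw [hgdef, he]
      exact sgnPow_inv hp1 _
    rw [hkey] at h2
    have := h1.add h2
    refine this.congr_deriv ?_
    symm
    have hpp' : p' * (p - 1) = p := by
      rw [hp'def]; field_simp
    linear_combination (sgnPow (p - 1) (S t) * deriv S t) * hpp'
  have hconst : ∀ t, |S t| ^ p + |g t| ^ p' = |S 0| ^ p + |g 0| ^ p' := fun t =>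
    is_const_of_deriv_eq_zero (fun u => (hEderiv u).differentiableAt)
      (fun u => (hEderiv u).deriv) t 0
  have h0 : |S 0| ^ p + |g 0| ^ p' = 1 := by
    rw [habs_g 0, hS0, hS'0]
    simp [Real.zero_rpow (by positivity : p ≠ 0)]
  intro t
  rw [← habs_g t]
  rw [hconst t, h0]

/-- the generalized Prüfer phase `θ` satisfies
`θ' = 1 - (q/λ) |S_p(λ^{1/p} θ)|^p`. -/
theorem prufer_phase_equation (p lam : ℝ) (hp : 1 < p) (hlam : 0 < lam)
    (q : ℝ → ℝ) (hq : MeasureTheory.LocallyIntegrable q)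
    (S : ℝ → ℝ) (hSdiff : Differentiable ℝ S)
    (hSODE : ∀ x : ℝ, HasDerivAt (fun t => sgnPow (p - 1) (deriv S t))
      (-((p - 1) * sgnPow (p - 1) (S x))) x)
    (hS0 : S 0 = 0) (hS'0 : deriv S 0 = 1)
    (y r θ : ℝ → ℝ)
    (hydiff : Differentiable ℝ y)
    (hnontriv : ∃ x, y x ≠ 0)
    (hyODE : ∀ x : ℝ, HasDerivAt (fun t => sgnPow (p - 1) (deriv y t))
      (-((p - 1) * (lam - q x) * sgnPow (p - 1) (y x))) x)
    (hrdiff : Differentiable ℝ r) (hθdiff : Differentiable ℝ θ)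
    (hrpos : ∀ x, 0 < r x)
    (hy : ∀ x, y x = r x * S (lam ^ (1 / p) * θ x))
    (hy' : ∀ x, deriv y x = lam ^ (1 / p) * r x * deriv S (lam ^ (1 / p) * θ x)) :
    ∀ x : ℝ, HasDerivAt θ (1 - q x / lam * |S (lam ^ (1 / p) * θ x)| ^ p) x := by
  have hp1 : (0:ℝ) < p - 1 := by linarith
  have hpyth := pyth_identity hp S hSdiff hSODE hS0 hS'0
  intro x
  set α : ℝ := lam ^ (1 / p) with hαdef
  have hα : 0 < α := Real.rpow_pos_of_pos hlam _
  set u : ℝ := α * θ x with hudef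
  set a : ℝ := S u with hadef
  set b : ℝ := deriv S u with hbdef
  set R : ℝ := r x with hRdef
  set R' : ℝ := deriv r x with hR'def
  set T' : ℝ := deriv θ x with hT'def
  set A1 : ℝ := sgnPow (p - 1) a with hA1def
  set B1 : ℝ := sgnPow (p - 1) b with hB1def
  have hR : 0 < R := hrpos x
  -- inner derivative
  have hinner : HasDerivAt (fun t => α * θ t) (α * T') x := (hθdiff x).hasDerivAt.const_mul α
  -- first equation
  have hScomp : HasDerivAt (fun t => S (α * θ t)) (b * (α * T')) x := by
    have := (hSdiff u).hasDerivAt.comp x hinner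
    simpa [Function.comp_def] using this
  have hprod : HasDerivAt y (R' * a + R * (b * (α * T'))) x := by
    have h := (hrdiff x).hasDerivAt.mul hScomp
    have hyfun : y = fun t => r t * S (α * θ t) := funext hy
    rw [hyfun]
    exact h
  have h1 : R' * a = α * R * b * (1 - T') := by
    have hd := hprod.deriv
    rw [hy' x] at hd
    linear_combination -hd
  -- second equation
  have hgcomp : HasDerivAt (fun t => sgnPow (p - 1) (deriv S (α * θ t)))
      (-((p - 1) * A1) * (α * T')) x := by
    have := (hSODE u).comp x hinner
    simpa [Function.comp_def] using this
  have hW : 0 < α * R := mul_pos hα hR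
  have hRcomp : HasDerivAt (fun t => (α * r t) ^ (p - 1))
      (α * R' * (p - 1) * (α * R) ^ (p - 1 - 1)) x :=
    ((hrdiff x).hasDerivAt.const_mul α).rpow_const (Or.inl hW.ne')
  have hF : HasDerivAt (fun t => (α * r t) ^ (p - 1) * sgnPow (p - 1) (deriv S (α * θ t)))
      (α * R' * (p - 1) * (α * R) ^ (p - 1 - 1) * sgnPow (p - 1) b
        + (α * R) ^ (p - 1) * (-((p - 1) * A1) * (α * T'))) x := hRcomp.mul hgcomp
  have hFfun : (fun t => sgnPow (p - 1) (deriv y t))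
      = fun t => (α * r t) ^ (p - 1) * sgnPow (p - 1) (deriv S (α * θ t)) := by
    funext t
    rw [hy' t, sgnPow_pos_mul (mul_pos hα (hrpos t))]
  have h2raw : α * R' * (p - 1) * (α * R) ^ (p - 1 - 1) * B1
      + (α * R) ^ (p - 1) * (-((p - 1) * A1) * (α * T'))
      = -((p - 1) * (lam - q x) * (R ^ (p - 1) * A1)) := by
    have hODE := hyODE x
    rw [hFfun] at hODE
    have := hF.unique hODE
    rw [hy x, sgnPow_pos_mul hR] at this
    exact this
  -- exponent bookkeeping
  set κ : ℝ := α ^ (p - 1 - 1) with hκdef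
  set ρ : ℝ := R ^ (p - 1 - 1) with hρdef
  have hρ : 0 < ρ := Real.rpow_pos_of_pos hR _
  have hW2 : (α * R) ^ (p - 1 - 1) = κ * ρ := Real.mul_rpow hα.le hR.le
  have hRe : R ^ (p - 1) = ρ * R := by
    rw [show p - 1 = (p - 1 - 1) + 1 by ring, Real.rpow_add_one hR.ne']
  have hαe : α ^ (p - 1) = κ * α := by
    rw [show p - 1 = (p - 1 - 1) + 1 by ring, Real.rpow_add_one hα.ne']
  have hW1 : (α * R) ^ (p - 1) = κ * α * (ρ * R) := by
    rw [Real.mul_rpow hα.le hR.le, hRe, hαe]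
  have hαp : α ^ p = lam := by
    rw [hαdef, ← Real.rpow_mul hlam.le]
    rw [show 1 / p * p = 1 by field_simp]
    exact Real.rpow_one lam
  have hlam_eq : κ * α * α = lam := by
    rw [← hαp, show p = ((p - 1 - 1) + 1) + 1 by ring,
      Real.rpow_add_one hα.ne', Real.rpow_add_one hα.ne']
  set β : ℝ := α ^ (p - 1) with hβdef
  have hβα : β * α = lam := by rw [hαe]; exact hlam_eq
  have h2 : β * (R' * B1) - lam * (R * (A1 * T')) = -((lam - q x) * (R * A1)) := by
    apply mul_left_cancel₀ (show (p - 1) * ρ ≠ 0 from (mul_pos hp1 hρ).ne')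
    linear_combination h2raw + ((p-1)*ρ*R'*B1) * hαe - ((p-1)*α*R'*B1) * hW2
      + ((p-1)*A1*α*T') * hW1 + ((p-1)*ρ*R*A1*T') * hlam_eq
      - ((p-1)*(lam - q x)*A1) * hRe
  -- algebra
  have hPQ : |a| ^ p + |b| ^ p = 1 := hpyth u
  have haA : a * A1 = |a| ^ p := by
    rw [hA1def, mul_sgnPow hp1, show p - 1 + 1 = p by ring]
  have hbB : b * B1 = |b| ^ p := by
    rw [hB1def, mul_sgnPow hp1, show p - 1 + 1 = p by ring]
  have key : R * (lam * T') = R * (lam - q x * |a| ^ p) := by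
    linear_combination (β*B1) * h1 - a * h2 + (lam*R - lam*R*T') * hPQ
      + (R*b*B1 - R*T'*b*B1) * hβα + (lam*R - lam*R*T' - q x*R) * haA
      + (lam*R - lam*R*T') * hbB
  have hT : T' = 1 - q x / lam * |a| ^ p := by
    have h := mul_left_cancel₀ hR.ne' key
    field_simp
    linarith
  rw [← hT]
  exact (hθdiff x).hasDerivAt
end

section
/- Let q ∈ L^1(0,1) and let (λ_n) be a sequence of positive reals with λ_n^{1/p} = O(n) and λ_n → ∞. Suppose for each n, θ_n: [0,1] → R is absolutely continuous with θ_n'(x) = 1 - (q(x)/λ_n)|S_p(λ_n^{1/p} θ_n(x))|^p, and suppose x_k^n satisfy θ_n(x_k^n) = k π̂ / λ_n^{1/p} with 0 ≤ x_1^n < ... < x_{n-1}^n ≤ 1. Define φ_n(x) = |S_p(λ_n^{1/p} θ_n(x))|^p - 1/p. Then ∫_{x_k^n}^{x_{k+1}^n} φ_n(x) dx = O(1/λ_n) = o(1/n), uniformly in k = 1, ..., n-2. -/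
open MeasureTheory Real Set Filter intervalIntegral
open scoped Topology

/-- The generalized half-period `π̂ = 2π/(p sin(π/p))`. -/
noncomputable def pihat (p : ℝ) : ℝ := 2 * Real.pi / (p * Real.sin (Real.pi / p))

lemma real_sign_mul_self (x : ℝ) : Real.sign x * x = |x| := by
  rcases lt_trichotomy x 0 with h | h | h
  · rw [Real.sign_of_neg h, abs_of_neg h]; ring
  · simp [h]
  · rw [Real.sign_of_pos h, abs_of_pos h]; ring

lemma self_mul_sgnPow {r : ℝ} (hr : 0 < r) (x : ℝ) : x * sgnPow r x = |x| ^ (r + 1) := by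
  rcases eq_or_ne x 0 with h | h
  · simp [h, sgnPow, Real.zero_rpow (by positivity : r + 1 ≠ 0),
      Real.zero_rpow (ne_of_gt hr)]
  · unfold sgnPow
    rw [Real.rpow_add (abs_pos.mpr h), Real.rpow_one,
      show x * (|x| ^ r * Real.sign x) = |x| ^ r * (Real.sign x * x) by ring, real_sign_mul_self]

lemma pihat_pos {p : ℝ} (hp : 1 < p) : 0 < pihat p := by
  have hπ := Real.pi_pos
  have h1 : 0 < Real.pi / p := by positivity
  have h2 : Real.pi / p < Real.pi := div_lt_self hπ hp
  have := Real.sin_pos_of_pos_of_lt_pi h1 h2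
  unfold pihat
  positivity

lemma rpow_lip {p : ℝ} (hp : 1 < p) {u v : ℝ} (hu : u ∈ Icc (0:ℝ) 1) (hv : v ∈ Icc (0:ℝ) 1) :
    |u ^ p - v ^ p| ≤ p * |u - v| := by
  have hp0 : (0:ℝ) < p := lt_trans one_pos hp
  have := (convex_Icc (0:ℝ) 1).norm_image_sub_le_of_norm_hasDerivWithin_le
    (f := fun t : ℝ => t ^ p) (f' := fun t : ℝ => p * t ^ (p - 1)) (C := p)
    (fun t _ => (Real.hasDerivAt_rpow_const (Or.inr hp.le)).hasDerivWithinAt)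
    (fun t ht => by
      have h1 : t ^ (p - 1) ≤ 1 := Real.rpow_le_one ht.1 ht.2 (by linarith)
      have h2 : (0:ℝ) ≤ t ^ (p - 1) := Real.rpow_nonneg ht.1 _
      rw [Real.norm_eq_abs, abs_of_nonneg (by positivity)]
      calc p * t ^ (p - 1) ≤ p * 1 := by nlinarith
        _ = p := mul_one p) hv hu
  simpa [Real.norm_eq_abs] using this

lemma ftc_comp {a b : ℝ} (hab : a ≤ b) (g : ℝ → ℝ) (hg : IntegrableOn g (Set.Ioc a b))
    (Φ Φ' : ℝ → ℝ) (hΦ : ∀ y, HasDerivAt Φ (Φ' y) y)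
    (M : ℝ) (hM : ∀ y, |Φ' y| ≤ M)
    (L : ℝ) (hL0 : 0 ≤ L) (hL : ∀ y z, |Φ' y - Φ' z| ≤ L * |y - z|) (c : ℝ) :
    Φ (c + ∫ s in a..b, g s) - Φ c = ∫ t in a..b, Φ' (c + ∫ s in a..t, g s) * g t := by
  set f : ℝ → ℝ := fun t => c + ∫ s in a..t, g s with hfdef
  have hfa : f a = c := by simp [hfdef]
  have hM0 : 0 ≤ M := le_trans (abs_nonneg _) (hM 0)
  have hgi : ∀ t ∈ Icc a b, IntervalIntegrable g volume a t := fun t ht =>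
    (intervalIntegrable_iff_integrableOn_Ioc_of_le ht.1).mpr
      (hg.mono_set (Ioc_subset_Ioc le_rfl ht.2))
  have iig : IntervalIntegrable g volume a b := hgi b ⟨hab, le_rfl⟩
  have hΦ'lip : LipschitzWith ⟨L, hL0⟩ Φ' := LipschitzWith.of_dist_le_mul (fun y z => by
    rw [Real.dist_eq, Real.dist_eq]; exact hL y z)
  have hΦ'cont : Continuous Φ' := hΦ'lip.continuous
  have hgIcc : IntegrableOn g (Icc a b) := (integrableOn_Icc_iff_integrableOn_Ioc).mpr hg
  have hfc : ContinuousOn f (Icc a b) := by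
    apply ContinuousOn.add continuousOn_const
    have := continuousOn_primitive_interval (a := a) (b := b) (μ := volume) (f := g)
      (by rwa [uIcc_of_le hab])
    rwa [uIcc_of_le hab] at this
  set K := ∫ t in Set.Ioc a b, |g t| with hKdef
  have hK0 : 0 ≤ K := integral_nonneg fun t => abs_nonneg _
  have hgabs : IntegrableOn (fun t => |g t|) (Set.Ioc a b) := hg.abs
  have key : ∀ ε > 0, |Φ (f b) - Φ (f a) - ∫ t in a..b, Φ' (f t) * g t| ≤ ε := by
    intro ε hε
    set δ := ε / (2 * M + L * K + 1) with hδdef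
    have hδpos : 0 < δ := div_pos hε (by positivity)
    obtain ⟨h, -, hint, hhcont, hhintg⟩ :=
      ((integrable_indicator_iff measurableSet_Ioc).mpr hg).exists_hasCompactSupport_integral_sub_le
        (μ := volume) hδpos
    have hδ1 : ∫ t in Set.Ioc a b, |g t - h t| ≤ δ := by
      have e1 : ∀ t ∈ Set.Ioc a b, |g t - h t| =
          ‖(Set.Ioc a b).indicator g t - h t‖ := fun t ht => by
        rw [Set.indicator_of_mem ht, Real.norm_eq_abs]
      calc ∫ t in Set.Ioc a b, |g t - h t|
          = ∫ t in Set.Ioc a b, ‖(Set.Ioc a b).indicator g t - h t‖ :=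
            setIntegral_congr_fun measurableSet_Ioc e1
        _ ≤ ∫ t, ‖(Set.Ioc a b).indicator g t - h t‖ :=
            setIntegral_le_integral
              ((((integrable_indicator_iff measurableSet_Ioc).mpr hg).sub hhintg).norm)
              (ae_of_all _ fun t => norm_nonneg _)
        _ ≤ δ := hint
    have hhii : ∀ u v : ℝ, IntervalIntegrable h volume u v := fun u v =>
      hhcont.intervalIntegrable u v
    set F : ℝ → ℝ := fun t => c + ∫ s in a..t, h s with hFdef
    have hF' : ∀ t, HasDerivAt F (h t) t := fun t =>
      HasDerivAt.const_add c
        (intervalIntegral.integral_hasDerivAt_right (hhii a t)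
          (hhcont.stronglyMeasurable.stronglyMeasurableAtFilter) hhcont.continuousAt)
    have hFcont : Continuous F := by
      rw [continuous_iff_continuousAt]; exact fun t => (hF' t).continuousAt
    have hFa : F a = c := by simp [hFdef]
    have hFf : ∀ t ∈ Icc a b, |F t - f t| ≤ δ := by
      intro t ht
      have e2 : F t - f t = ∫ s in a..t, (h s - g s) := by
        rw [intervalIntegral.integral_sub (hhii a t) (hgi t ht)]
        simp [hFdef, hfdef]
      rw [e2]
      calc |∫ s in a..t, (h s - g s)| ≤ ∫ s in a..t, |h s - g s| :=
            intervalIntegral.abs_integral_le_integral_abs ht.1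
        _ = ∫ s in Set.Ioc a t, |h s - g s| := by
            rw [intervalIntegral.integral_of_le ht.1]
        _ ≤ ∫ s in Set.Ioc a b, |h s - g s| := by
            exact setIntegral_mono_set ((hhintg.integrableOn.sub hg).abs)
              (ae_of_all _ fun s => abs_nonneg _)
              (HasSubset.Subset.eventuallyLE (Ioc_subset_Ioc le_rfl ht.2))
        _ = ∫ s in Set.Ioc a b, |g s - h s| := by
            congr 1; ext s; rw [abs_sub_comm]
        _ ≤ δ := hδ1
    have hΦF : ∀ t, HasDerivAt (fun s => Φ (F s)) (Φ' (F t) * h t) t := fun t =>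
      (hΦ (F t)).comp t (hF' t)
    have hcont1 : Continuous fun t => Φ' (F t) * h t :=
      (hΦ'cont.comp hFcont).mul hhcont
    have hFTC : ∫ t in a..b, Φ' (F t) * h t = Φ (F b) - Φ (F a) :=
      intervalIntegral.integral_eq_sub_of_hasDerivAt (fun t _ => hΦF t)
        (hcont1.intervalIntegrable a b)
    have hΦ'Fc : Continuous fun t => Φ' (F t) := hΦ'cont.comp hFcont
    have hΦ'fOn : ContinuousOn (fun t => Φ' (f t)) (Icc a b) := hΦ'cont.comp_continuousOn hfc
    have A1 : IntervalIntegrable (fun t => Φ' (F t) * h t) volume a b :=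
      hcont1.intervalIntegrable a b
    have A3 : IntervalIntegrable (fun t => Φ' (f t) * g t) volume a b :=
      iig.continuousOn_mul (by rwa [uIcc_of_le hab])
    have hint1 : IntervalIntegrable (fun t => Φ' (F t) * (h t - g t)) volume a b :=
      ((hhii a b).sub iig).continuousOn_mul hΦ'Fc.continuousOn
    have hint2 : IntervalIntegrable (fun t => (Φ' (F t) - Φ' (f t)) * g t) volume a b :=
      iig.continuousOn_mul ((hΦ'Fc.continuousOn.sub hΦ'fOn).mono (by rw [uIcc_of_le hab]))
    have hΦlip : ∀ y z : ℝ, |Φ y - Φ z| ≤ M * |y - z| := by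
      intro y z
      have := convex_univ.norm_image_sub_le_of_norm_hasDerivWithin_le (f := Φ) (f' := Φ')
        (C := M) (fun u _ => (hΦ u).hasDerivWithinAt)
        (fun u _ => by simpa [Real.norm_eq_abs] using hM u) (mem_univ z) (mem_univ y)
      simpa [Real.norm_eq_abs] using this
    have hT1 : |Φ (f b) - Φ (F b)| ≤ M * δ := by
      have h2 : |f b - F b| ≤ δ := by rw [abs_sub_comm]; exact hFf b ⟨hab, le_rfl⟩
      calc |Φ (f b) - Φ (F b)| ≤ M * |f b - F b| := hΦlip (f b) (F b)
        _ ≤ M * δ := mul_le_mul_of_nonneg_left h2 hM0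
    have hE1 : |∫ t in a..b, Φ' (F t) * (h t - g t)| ≤ M * δ := by
      have habs : IntervalIntegrable (fun t => M * |h t - g t|) volume a b :=
        (((hhii a b).sub iig).abs).const_mul M
      calc |∫ t in a..b, Φ' (F t) * (h t - g t)|
          ≤ ∫ t in a..b, |Φ' (F t) * (h t - g t)| :=
            intervalIntegral.abs_integral_le_integral_abs hab
        _ ≤ ∫ t in a..b, M * |h t - g t| := by
            apply intervalIntegral.integral_mono_on hab hint1.abs habs
            intro t _
            rw [abs_mul]
            exact mul_le_mul_of_nonneg_right (hM _) (abs_nonneg _)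
        _ = M * ∫ t in a..b, |h t - g t| := intervalIntegral.integral_const_mul M _
        _ ≤ M * δ := by
            apply mul_le_mul_of_nonneg_left ?_ hM0
            rw [intervalIntegral.integral_of_le hab]
            calc ∫ t in Set.Ioc a b, |h t - g t|
                = ∫ t in Set.Ioc a b, |g t - h t| := by congr 1; ext t; rw [abs_sub_comm]
              _ ≤ δ := hδ1
    have hE2 : |∫ t in a..b, (Φ' (F t) - Φ' (f t)) * g t| ≤ L * δ * K := by
      have habs2 : IntervalIntegrable (fun t => L * δ * |g t|) volume a b :=
        (iig.abs).const_mul _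
      calc |∫ t in a..b, (Φ' (F t) - Φ' (f t)) * g t|
          ≤ ∫ t in a..b, |(Φ' (F t) - Φ' (f t)) * g t| :=
            intervalIntegral.abs_integral_le_integral_abs hab
        _ ≤ ∫ t in a..b, L * δ * |g t| := by
            apply intervalIntegral.integral_mono_on hab hint2.abs habs2
            intro t ht
            rw [abs_mul]
            apply mul_le_mul ?_ le_rfl (abs_nonneg _) (by positivity)
            calc |Φ' (F t) - Φ' (f t)| ≤ L * |F t - f t| := hL _ _
              _ ≤ L * δ := mul_le_mul_of_nonneg_left (hFf t ht) hL0
        _ = L * δ * ∫ t in a..b, |g t| := intervalIntegral.integral_const_mul _ _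
        _ = L * δ * K := by rw [intervalIntegral.integral_of_le hab]
    have hsplit : (∫ t in a..b, Φ' (F t) * h t) - ∫ t in a..b, Φ' (f t) * g t
        = (∫ t in a..b, Φ' (F t) * (h t - g t))
          + ∫ t in a..b, (Φ' (F t) - Φ' (f t)) * g t := by
      rw [← intervalIntegral.integral_add hint1 hint2, ← intervalIntegral.integral_sub A1 A3]
      apply intervalIntegral.integral_congr
      intro t _
      ring
    have hdelta : δ * (2 * M + L * K + 1) = ε := by
      rw [hδdef]; field_simp
    calc |Φ (f b) - Φ (f a) - ∫ t in a..b, Φ' (f t) * g t|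
        = |(Φ (f b) - Φ (F b)) + ((∫ t in a..b, Φ' (F t) * (h t - g t))
            + ∫ t in a..b, (Φ' (F t) - Φ' (f t)) * g t)| := by
          rw [← hsplit, hFTC, hfa, ← hFa]
          congr 1
          ring
      _ ≤ |Φ (f b) - Φ (F b)| + |(∫ t in a..b, Φ' (F t) * (h t - g t))
            + ∫ t in a..b, (Φ' (F t) - Φ' (f t)) * g t| := abs_add_le _ _
      _ ≤ |Φ (f b) - Φ (F b)| + (|∫ t in a..b, Φ' (F t) * (h t - g t)|
            + |∫ t in a..b, (Φ' (F t) - Φ' (f t)) * g t|) := by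
          have := abs_add_le (∫ t in a..b, Φ' (F t) * (h t - g t))
            (∫ t in a..b, (Φ' (F t) - Φ' (f t)) * g t)
          linarith
      _ ≤ M * δ + (M * δ + L * δ * K) := by linarith
      _ ≤ ε := by nlinarith [hδpos.le, mul_nonneg hL0 hK0]
  have hmain : Φ (f b) - Φ (f a) = ∫ t in a..b, Φ' (f t) * g t := by
    have h0 : |Φ (f b) - Φ (f a) - ∫ t in a..b, Φ' (f t) * g t| ≤ 0 := by
      by_contra hcon
      push_neg at hcon
      rcases key _ (half_pos hcon) with h1
      linarith
    have h1 := abs_nonneg (Φ (f b) - Φ (f a) - ∫ t in a..b, Φ' (f t) * g t)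
    have h2 : Φ (f b) - Φ (f a) - ∫ t in a..b, Φ' (f t) * g t = 0 := by
      rw [← abs_eq_zero]; linarith
    linarith
  show Φ (f b) - Φ c = ∫ t in a..b, Φ' (f t) * g t
  rw [← hfa]
  exact hmain

lemma pyth {p : ℝ} {S : ℝ → ℝ} (hp : 1 < p) (hSdiff : Differentiable ℝ S)
    (hSODE : ∀ x : ℝ, HasDerivAt (fun t => sgnPow (p - 1) (deriv S t))
      (-((p - 1) * sgnPow (p - 1) (S x))) x)
    (hSprod : ∀ x : ℝ, HasDerivAt (fun t => S t * sgnPow (p - 1) (deriv S t))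
      (1 - p * |S x| ^ p) x) (y : ℝ) :
    |deriv S y| ^ p + |S y| ^ p = 1 := by
  have hp1 : 0 < p - 1 := by linarith
  have h1 := ((hSdiff y).hasDerivAt.mul (hSODE y))
  have h2 := (hSprod y).unique h1
  have e1 : deriv S y * sgnPow (p - 1) (deriv S y) = |deriv S y| ^ p := by
    rw [self_mul_sgnPow hp1, sub_add_cancel]
  have e2 : S y * sgnPow (p - 1) (S y) = |S y| ^ p := by
    rw [self_mul_sgnPow hp1, sub_add_cancel]
  have h4 : S y * -((p - 1) * sgnPow (p - 1) (S y)) = -((p - 1) * |S y| ^ p) := by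
    rw [← e2]; ring
  rw [e1, h4] at h2
  linarith


set_option maxHeartbeats 2000000 in
/-- the integrals of `φ_n = |S_p(λ_n^{1/p}θ_n)|^p - 1/p` over the
nodal intervals are `O(1/λ_n) = o(1/n)`, uniformly in `k = 1, …, n-2`. -/
theorem phi_integral_small (p : ℝ) (hp : 1 < p) (S : ℝ → ℝ)
    (hSdiff : Differentiable ℝ S)
    (hSODE : ∀ x : ℝ, HasDerivAt (fun t => sgnPow (p - 1) (deriv S t))
      (-((p - 1) * sgnPow (p - 1) (S x))) x)
    (hS0 : S 0 = 0) (hS'0 : deriv S 0 = 1)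
    (hSzero : ∀ k : ℤ, S (k * pihat p) = 0)
    (hSprod : ∀ x : ℝ, HasDerivAt (fun t => S t * sgnPow (p - 1) (deriv S t))
      (1 - p * |S x| ^ p) x)
    (q : ℝ → ℝ) (hq : IntegrableOn q (Set.Ioo 0 1))
    (lam : ℕ → ℝ) (hlampos : ∀ n, 0 < lam n)
    (hlamO : ∃ C : ℝ, ∀ n : ℕ, (lam n) ^ (1 / p) ≤ C * n)
    (hlamtop : Tendsto lam atTop atTop)
    (θ : ℕ → ℝ → ℝ)
    (hphase : ∀ n : ℕ, ∀ a ∈ Set.Icc (0:ℝ) 1, ∀ b ∈ Set.Icc (0:ℝ) 1,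
      θ n b - θ n a =
        ∫ t in a..b, (1 - q t / lam n * |S ((lam n) ^ (1 / p) * θ n t)| ^ p))
    (x : ℕ → ℕ → ℝ)
    (hxmem : ∀ n : ℕ, ∀ k : ℕ, 1 ≤ k → k ≤ n - 1 → x n k ∈ Set.Icc (0:ℝ) 1)
    (hxmono : ∀ n : ℕ, ∀ k : ℕ, 1 ≤ k → k + 1 ≤ n - 1 → x n k < x n (k + 1))
    (hxnode : ∀ n : ℕ, ∀ k : ℕ, 1 ≤ k → k ≤ n - 1 →
      θ n (x n k) = k * pihat p / (lam n) ^ (1 / p)) :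
    (∃ C : ℝ, ∀ n : ℕ, ∀ k : ℕ, 1 ≤ k → k ≤ n - 2 →
      |∫ t in (x n k)..(x n (k + 1)),
          (|S ((lam n) ^ (1 / p) * θ n t)| ^ p - 1 / p)| ≤ C / lam n) ∧
    (∀ ε > 0, ∃ N : ℕ, ∀ n ≥ N, ∀ k : ℕ, 1 ≤ k → k ≤ n - 2 →
      |∫ t in (x n k)..(x n (k + 1)),
          (|S ((lam n) ^ (1 / p) * θ n t)| ^ p - 1 / p)| ≤ ε / n) := by
  have hp0 : (0:ℝ) < p := lt_trans one_pos hp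
  have hπ : 0 < pihat p := pihat_pos hp
  have hpyth : ∀ y, |deriv S y| ^ p + |S y| ^ p = 1 := pyth hp hSdiff hSODE hSprod
  have hw01 : ∀ y : ℝ, 0 ≤ |S y| ^ p ∧ |S y| ^ p ≤ 1 := fun y =>
    ⟨Real.rpow_nonneg (abs_nonneg _) _, by
      nlinarith [hpyth y, Real.rpow_nonneg (abs_nonneg (deriv S y)) p]⟩
  have habs1 : ∀ y : ℝ, |S y| ≤ 1 := by
    intro y; by_contra hc; push_neg at hc
    have := (Real.one_lt_rpow_iff_of_pos (lt_trans one_pos hc)).mpr (Or.inl ⟨hc, hp0⟩)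
    nlinarith [(hw01 y).2]
  have hd1 : ∀ y : ℝ, |deriv S y| ≤ 1 := by
    intro y; by_contra hc; push_neg at hc
    have h1 : 1 < |deriv S y| ^ p :=
      (Real.one_lt_rpow_iff_of_pos (lt_trans one_pos hc)).mpr (Or.inl ⟨hc, hp0⟩)
    nlinarith [hpyth y, (hw01 y).1]
  have hSlip : ∀ y z : ℝ, |S y - S z| ≤ |y - z| := by
    intro y z
    have := convex_univ.norm_image_sub_le_of_norm_hasDerivWithin_le (f := S) (f' := deriv S)
      (C := 1) (fun u _ => (hSdiff u).hasDerivAt.hasDerivWithinAt)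
      (fun u _ => by simpa [Real.norm_eq_abs] using hd1 u) (mem_univ z) (mem_univ y)
    simpa [Real.norm_eq_abs] using this
  have hwlip : ∀ y z : ℝ, |(|S y| ^ p) - (|S z| ^ p)| ≤ p * |y - z| := by
    intro y z
    have h1 := rpow_lip hp (show |S y| ∈ Icc (0:ℝ) 1 from ⟨abs_nonneg _, habs1 y⟩)
      (show |S z| ∈ Icc (0:ℝ) 1 from ⟨abs_nonneg _, habs1 z⟩)
    have h2 : |(|S y|) - (|S z|)| ≤ |S y - S z| := abs_abs_sub_abs_le_abs_sub _ _
    have h3 := hSlip y z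
    calc |(|S y| ^ p) - (|S z| ^ p)| ≤ p * |(|S y|) - (|S z|)| := h1
      _ ≤ p * |y - z| := by nlinarith
  -- integrability of |q| and q on Ioc 0 1
  have hsub01 : Set.Ioc (0:ℝ) 1 ⊆ Set.Ioo (0:ℝ) 1 ∪ {1} := by
    intro t ht
    rcases eq_or_lt_of_le ht.2 with h | h
    · exact Or.inr (by simp [h])
    · exact Or.inl ⟨ht.1, h⟩
  have hqI : IntegrableOn q (Set.Ioc 0 1) :=
    (hq.union ((integrableOn_singleton_iff).mpr (Or.inr (by simp)))).mono_set hsub01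
  have hqIoc : IntegrableOn (fun t => |q t|) (Set.Ioc 0 1) := hqI.abs
  set K := ∫ t in Set.Ioc (0:ℝ) 1, |q t| with hKdef
  have hK0 : 0 ≤ K := integral_nonneg fun t => abs_nonneg _
  -- integrability of the phase integrand
  have hdom : ∀ (n : ℕ) (t : ℝ),
      |1 - q t / lam n * |S (lam n ^ (1 / p) * θ n t)| ^ p| ≤ 1 + |q t| / lam n := by
    intro n t
    have hlp := hlampos n
    set u := q t / lam n * |S (lam n ^ (1 / p) * θ n t)| ^ p with hu
    have h1 := (hw01 (lam n ^ (1 / p) * θ n t)).1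
    have h2 := (hw01 (lam n ^ (1 / p) * θ n t)).2
    have h3 : |u| ≤ |q t| / lam n := by
      rw [hu, abs_mul, abs_div, abs_of_pos hlp, abs_of_nonneg h1]
      calc |q t| / lam n * |S (lam n ^ (1 / p) * θ n t)| ^ p ≤ |q t| / lam n * 1 :=
            mul_le_mul_of_nonneg_left h2 (by positivity)
        _ = |q t| / lam n := mul_one _
    have h4 := le_abs_self u
    have h5 := neg_abs_le u
    rw [abs_le]
    constructor <;> linarith
  have hgint : ∀ n : ℕ, IntegrableOn
      (fun t => 1 - q t / lam n * |S (lam n ^ (1 / p) * θ n t)| ^ p) (Set.Ioc (0:ℝ) 1) := by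
    intro n
    set gn : ℝ → ℝ := fun t => 1 - q t / lam n * |S (lam n ^ (1 / p) * θ n t)| ^ p with hgn
    have hlp := hlampos n
    have hdom' : ∀ t, ‖gn t‖ ≤ 1 + |q t| / lam n := fun t => by
      rw [Real.norm_eq_abs]; exact hdom n t
    have hcomp : IntegrableOn (fun t => 1 + |q t| / lam n) (Set.Ioc (0:ℝ) 1) :=
      (integrableOn_const measure_Ioc_lt_top.ne).add (hqIoc.div_const _)
    set I : Set ℝ := {b : ℝ | b ∈ Icc (0:ℝ) 1 ∧ IntegrableOn gn (Set.Ioc 0 b)} with hI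
    have h0I : (0:ℝ) ∈ I := ⟨⟨le_rfl, zero_le_one⟩, by rw [Set.Ioc_self]; exact integrableOn_empty⟩
    have hIb : BddAbove I := ⟨1, fun b hb => hb.1.2⟩
    have hIne : I.Nonempty := ⟨0, h0I⟩
    set β := sSup I with hβ
    have hβ0 : 0 ≤ β := le_csSup hIb h0I
    have hβ1 : β ≤ 1 := csSup_le hIne fun b hb => hb.1.2
    have hlt : ∀ b : ℝ, b < β → IntegrableOn gn (Set.Ioc 0 b) := by
      intro b hbβ
      obtain ⟨b', hb'I, hbb'⟩ := exists_lt_of_lt_csSup hIne hbβ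
      exact hb'I.2.mono_set (Ioc_subset_Ioc le_rfl hbb'.le)
    have ha : IntegrableOn gn (Set.Ioo 0 β) := by
      rcases eq_or_lt_of_le hβ0 with h | h
      · rw [← h, Set.Ioo_self]; exact integrableOn_empty
      · have hunion : Set.Ioo (0:ℝ) β = ⋃ m : ℕ, Set.Ioc 0 (β - β / (m + 2)) := by
          ext t
          simp only [mem_Ioo, mem_iUnion, mem_Ioc]
          constructor
          · rintro ⟨ht0, htβ⟩
            obtain ⟨m, hm⟩ := exists_nat_gt (β / (β - t))
            refine ⟨m, ht0, ?_⟩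
            have h1 : 0 < β - t := by linarith
            have h2 : β / (β - t) < (m:ℝ) + 2 := by push_cast at hm ⊢; linarith
            have h3 : β < ((m:ℝ) + 2) * (β - t) := by
              rw [div_lt_iff₀ h1] at h2; linarith
            have h4 : β / ((m:ℝ) + 2) < β - t := by
              rw [div_lt_iff₀ (by positivity)]; linarith
            linarith
          · rintro ⟨m, ht0, htm⟩
            have h4 : 0 < β / ((m:ℝ) + 2) := by positivity
            exact ⟨ht0, by linarith⟩
        have hsub : ∀ m : ℕ, IntegrableOn gn (Set.Ioc 0 (β - β / (m + 2))) := by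
          intro m
          apply hlt
          have : 0 < β / ((m:ℝ) + 2) := by positivity
          linarith
        have hmeas : AEStronglyMeasurable gn (volume.restrict (Set.Ioo 0 β)) := by
          rw [hunion, aestronglyMeasurable_iUnion_iff]
          exact fun m => (hsub m).aestronglyMeasurable
        apply Integrable.mono' (hcomp.mono_set ?_) hmeas (ae_of_all _ hdom')
        exact fun t ht => ⟨ht.1, le_trans ht.2.le hβ1⟩
    have hbconst : ∀ t : ℝ, β < t → t ≤ 1 → θ n t = θ n 0 := by
      intro t htβ ht1
      have hni : ¬ IntegrableOn gn (Set.Ioc 0 t) := by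
        intro hcon
        have : t ∈ I := ⟨⟨le_trans hβ0 htβ.le, ht1⟩, hcon⟩
        exact absurd (le_csSup hIb this) (not_le.mpr htβ)
      have hph := hphase n 0 ⟨le_rfl, zero_le_one⟩ t ⟨le_trans hβ0 htβ.le, ht1⟩
      rw [intervalIntegral.integral_undef] at hph
      · linarith
      · rw [intervalIntegrable_iff_integrableOn_Ioc_of_le (le_trans hβ0 htβ.le)]
        exact hni
    have hc : IntegrableOn gn (Set.Ioc β 1) := by
      have hcomp2 : IntegrableOn
          (fun t => 1 - q t / lam n * |S (lam n ^ (1 / p) * θ n 0)| ^ p) (Set.Ioc β 1) := by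
        apply Integrable.sub (integrableOn_const (C := (1:ℝ)) measure_Ioc_lt_top.ne)
        exact ((hqI.mono_set (Ioc_subset_Ioc hβ0 le_rfl)).div_const _).mul_const _
      apply IntegrableOn.congr_fun hcomp2 ?_ measurableSet_Ioc
      intro t ht
      simp only [hgn]
      rw [hbconst t ht.1 ht.2]
    have hfin : IntegrableOn gn ((Set.Ioo 0 β ∪ Set.Ioc β 1) ∪ {β}) := by
      apply IntegrableOn.union (ha.union hc)
      exact (integrableOn_singleton_iff).mpr (Or.inr (by simp))
    apply hfin.mono_set
    intro t ht
    rcases lt_trichotomy t β with h | h | h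
    · exact Or.inl (Or.inl ⟨ht.1, h⟩)
    · exact Or.inr (by simp [h])
    · exact Or.inl (Or.inr ⟨h, ht.2⟩)
  have hmain : ∀ n k : ℕ, 1 ≤ k → k ≤ n - 2 →
      |∫ t in (x n k)..(x n (k + 1)),
          (|S ((lam n) ^ (1 / p) * θ n t)| ^ p - 1 / p)| ≤ K / lam n := by
    intro n k hk1 hk2
    have hn3 : 3 ≤ n := by omega
    have hkn1 : k ≤ n - 1 := by omega
    have hkn1' : k + 1 ≤ n - 1 := by omega
    have haI : x n k ∈ Icc (0:ℝ) 1 := hxmem n k hk1 hkn1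
    have hbI : x n (k + 1) ∈ Icc (0:ℝ) 1 := hxmem n (k + 1) (by omega) hkn1'
    have hab : x n k ≤ x n (k + 1) := (hxmono n k hk1 hkn1').le
    set a := x n k with hadef
    set b := x n (k + 1) with hbdef
    set μ := lam n ^ (1 / p) with hμdef
    have hμ : 0 < μ := Real.rpow_pos_of_pos (hlampos n) _
    have hlp := hlampos n
    set gn : ℝ → ℝ := fun t => 1 - q t / lam n * |S (μ * θ n t)| ^ p with hgn
    have hgint' : IntegrableOn gn (Set.Ioc (0:ℝ) 1) := by
      rw [hgn, hμdef]; exact hgint n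
    have hgab : IntegrableOn gn (Set.Ioc a b) := hgint'.mono_set (Ioc_subset_Ioc haI.1 hbI.2)
    have iig : IntervalIntegrable gn volume a b :=
      (intervalIntegrable_iff_integrableOn_Ioc_of_le hab).mpr hgab
    set Φ : ℝ → ℝ := fun y => S (μ * y) * sgnPow (p - 1) (deriv S (μ * y)) with hΦdef
    set Φ' : ℝ → ℝ := fun y => μ * (1 - p * |S (μ * y)| ^ p) with hΦ'def
    have hΦd : ∀ y, HasDerivAt Φ (Φ' y) y := by
      intro y
      have h1 : HasDerivAt (fun y : ℝ => μ * y) μ y := by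
        simpa using (hasDerivAt_id y).const_mul μ
      have h2 := (hSprod (μ * y)).comp y h1
      rw [hΦdef, hΦ'def]
      exact h2.congr_deriv (mul_comm _ _)
    have hM : ∀ y, |Φ' y| ≤ μ * p := by
      intro y
      have h1 := (hw01 (μ * y)).1
      have h2 := (hw01 (μ * y)).2
      rw [hΦ'def]
      simp only []
      rw [abs_mul, abs_of_pos hμ]
      apply mul_le_mul_of_nonneg_left ?_ hμ.le
      rw [abs_le]; constructor <;> nlinarith
    have hL : ∀ y z, |Φ' y - Φ' z| ≤ (μ * μ * p * p) * |y - z| := by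
      intro y z
      have h1 := hwlip (μ * y) (μ * z)
      have e : Φ' y - Φ' z = μ * p * ((|S (μ * z)| ^ p) - (|S (μ * y)| ^ p)) := by
        rw [hΦ'def]; ring
      rw [e, abs_mul, abs_of_pos (by positivity : (0:ℝ) < μ * p), abs_sub_comm]
      calc μ * p * |(|S (μ * y)| ^ p) - (|S (μ * z)| ^ p)|
          ≤ μ * p * (p * |μ * y - μ * z|) := by
            apply mul_le_mul_of_nonneg_left h1 (by positivity)
        _ = (μ * μ * p * p) * |y - z| := by
            rw [show μ * y - μ * z = μ * (y - z) by ring, abs_mul, abs_of_pos hμ]; ring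
    have hftc := ftc_comp hab gn hgab Φ Φ' hΦd (μ * p) hM (μ * μ * p * p) (by positivity) hL (θ n a)
    have hθt : ∀ t ∈ Icc a b, θ n t - θ n a = ∫ s in a..t, gn s := by
      intro t ht
      have h := hphase n a haI t ⟨le_trans haI.1 ht.1, le_trans ht.2 hbI.2⟩
      rw [← hμdef, ← hgn] at h
      exact h
    have hθb : θ n a + ∫ s in a..b, gn s = θ n b := by
      have := hθt b ⟨hab, le_rfl⟩; linarith
    have hnodea : θ n a = (k : ℝ) * pihat p / μ := by
      rw [hadef, hμdef]; exact hxnode n k hk1 hkn1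
    have hnodeb : θ n b = ((k : ℝ) + 1) * pihat p / μ := by
      have := hxnode n (k + 1) (by omega) hkn1'
      rw [hbdef, hμdef]
      push_cast at this ⊢
      exact this
    have hΦa : Φ (θ n a) = 0 := by
      have e : μ * θ n a = (k : ℝ) * pihat p := by
        rw [hnodea]; field_simp
      rw [hΦdef]
      simp only [e]
      have hz := hSzero (k : ℤ)
      push_cast at hz
      rw [hz, zero_mul]
    have hΦb : Φ (θ n b) = 0 := by
      have e : μ * θ n b = ((k : ℝ) + 1) * pihat p := by
        rw [hnodeb]; field_simp
      rw [hΦdef]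
      simp only [e]
      have hz := hSzero ((k : ℤ) + 1)
      push_cast at hz
      rw [hz, zero_mul]
    have hzero : ∫ t in a..b, Φ' (θ n t) * gn t = 0 := by
      have e : ∀ t ∈ uIcc a b, Φ' (θ n a + ∫ s in a..t, gn s) * gn t = Φ' (θ n t) * gn t := by
        intro t ht
        rw [uIcc_of_le hab] at ht
        have := hθt t ht
        have e2 : θ n a + ∫ s in a..t, gn s = θ n t := by linarith
        rw [e2]
      rw [← intervalIntegral.integral_congr e, ← hftc, hθb, hΦb, hΦa, sub_zero]
    set Θ : ℝ → ℝ := fun t => θ n 0 + ∫ s in (0:ℝ)..t, gn s with hΘdef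
    have hΘeq : ∀ t ∈ Icc (0:ℝ) 1, θ n t = Θ t := by
      intro t ht
      have h := hphase n 0 ⟨le_rfl, zero_le_one⟩ t ht
      rw [← hμdef, ← hgn] at h
      rw [hΘdef]
      simp only []
      linarith
    have hΘcont : ContinuousOn Θ (Icc (0:ℝ) 1) := by
      rw [hΘdef]
      apply ContinuousOn.add continuousOn_const
      have := continuousOn_primitive_interval (a := (0:ℝ)) (b := (1:ℝ)) (μ := volume) (f := gn)
        (by rw [uIcc_of_le zero_le_one]; exact (integrableOn_Icc_iff_integrableOn_Ioc).mpr hgint')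
      rwa [uIcc_of_le zero_le_one] at this
    set w : ℝ → ℝ := fun t => |S (μ * Θ t)| ^ p with hwdef
    have hwcont : ContinuousOn w (Icc (0:ℝ) 1) := by
      rw [hwdef]
      exact ((hSdiff.continuous.comp_continuousOn
        (continuousOn_const.mul hΘcont)).abs).rpow_const (fun t _ => Or.inr hp0.le)
    have hsubI : uIcc a b ⊆ Icc (0:ℝ) 1 := by
      rw [uIcc_of_le hab]; exact fun t ht => ⟨le_trans haI.1 ht.1, le_trans ht.2 hbI.2⟩
    set A : ℝ → ℝ := fun t => 1 - p * w t with hAdef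
    have hAcont : ContinuousOn A (Icc (0:ℝ) 1) := by
      rw [hAdef]; exact continuousOn_const.sub (continuousOn_const.mul hwcont)
    have iiA : IntervalIntegrable A volume a b := (hAcont.mono hsubI).intervalIntegrable
    have iiAg : IntervalIntegrable (fun t => A t * gn t) volume a b :=
      iig.continuousOn_mul (hAcont.mono hsubI)
    have hzero2 : ∫ t in a..b, A t * gn t = 0 := by
      have e : ∀ t ∈ uIcc a b, Φ' (θ n t) * gn t = μ * (A t * gn t) := by
        intro t ht
        have h1 : θ n t = Θ t := hΘeq t (hsubI ht)
        rw [hΦ'def, hAdef, hwdef, h1]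
        ring
      rw [intervalIntegral.integral_congr e, intervalIntegral.integral_const_mul] at hzero
      rcases mul_eq_zero.mp hzero with h | h
      · exact absurd h (ne_of_gt hμ)
      · exact h
    have hsplit : ∫ t in a..b, A t * (1 - gn t) = ∫ t in a..b, A t := by
      have e : ∀ t ∈ uIcc a b, A t * (1 - gn t) = A t - A t * gn t := fun t _ => by ring
      rw [intervalIntegral.integral_congr e, intervalIntegral.integral_sub iiA iiAg, hzero2,
        sub_zero]
    have htarget : ∫ t in a..b, (|S (μ * θ n t)| ^ p - 1 / p)
        = -(1 / p) * ∫ t in a..b, A t := by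
      rw [← intervalIntegral.integral_const_mul]
      apply intervalIntegral.integral_congr
      intro t ht
      have h1 : θ n t = Θ t := hΘeq t (hsubI ht)
      simp only [h1, hAdef, hwdef]
      have hpne : p ≠ 0 := ne_of_gt hp0
      field_simp
      ring
    have hbd : |∫ t in a..b, A t * (1 - gn t)| ≤ p / lam n * K := by
      have hqab : IntervalIntegrable (fun t => p / lam n * |q t|) volume a b := by
        apply (intervalIntegrable_iff_integrableOn_Ioc_of_le hab).mpr
        exact (hqIoc.mono_set (Ioc_subset_Ioc haI.1 hbI.2)).const_mul _
      have hAg1 : IntervalIntegrable (fun t => A t * (1 - gn t)) volume a b := by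
        have e : (fun t => A t * (1 - gn t)) = fun t => A t - A t * gn t :=
          funext fun t => by ring
        rw [e]; exact iiA.sub iiAg
      calc |∫ t in a..b, A t * (1 - gn t)| ≤ ∫ t in a..b, |A t * (1 - gn t)| :=
            intervalIntegral.abs_integral_le_integral_abs hab
        _ ≤ ∫ t in a..b, p / lam n * |q t| := by
            apply intervalIntegral.integral_mono_on hab hAg1.abs hqab
            intro t ht
            have hX1 := (hw01 (μ * θ n t)).1
            have hX2 := (hw01 (μ * θ n t)).2
            have hwt0 : 0 ≤ w t := by rw [hwdef]; exact (hw01 _).1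
            have hwt1 : w t ≤ 1 := by rw [hwdef]; exact (hw01 _).2
            have hA : |A t| ≤ p := by
              rw [hAdef, abs_le]
              constructor <;> simp only [] <;> nlinarith
            have h1g : |1 - gn t| ≤ |q t| / lam n := by
              have e : 1 - gn t = q t / lam n * |S (μ * θ n t)| ^ p := by
                rw [hgn]; ring
              rw [e, abs_mul, abs_div, abs_of_pos hlp, abs_of_nonneg hX1]
              calc |q t| / lam n * |S (μ * θ n t)| ^ p ≤ |q t| / lam n * 1 :=
                    mul_le_mul_of_nonneg_left hX2 (by positivity)
                _ = |q t| / lam n := mul_one _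
            calc |A t * (1 - gn t)| = |A t| * |1 - gn t| := abs_mul _ _
              _ ≤ p * (|q t| / lam n) := mul_le_mul hA h1g (abs_nonneg _) hp0.le
              _ = p / lam n * |q t| := by ring
        _ = p / lam n * ∫ t in a..b, |q t| := intervalIntegral.integral_const_mul _ _
        _ ≤ p / lam n * K := by
            apply mul_le_mul_of_nonneg_left ?_ (by positivity)
            rw [intervalIntegral.integral_of_le hab, hKdef]
            exact setIntegral_mono_set hqIoc (ae_of_all _ fun t => abs_nonneg _)
              (HasSubset.Subset.eventuallyLE (Ioc_subset_Ioc haI.1 hbI.2))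
    rw [htarget, abs_mul, ← hsplit]
    have habs : |(-(1 / p))| = 1 / p := by
      rw [abs_neg, abs_of_pos (by positivity)]
    rw [habs]
    calc 1 / p * |∫ t in a..b, A t * (1 - gn t)| ≤ 1 / p * (p / lam n * K) := by
          apply mul_le_mul_of_nonneg_left hbd (by positivity)
      _ = K / lam n := by field_simp
  have hgap : ∀ n : ℕ, 3 ≤ n → ((n:ℝ) - 2) * pihat p ≤ lam n ^ (1 / p) * (1 + K / lam n) := by
    intro n hn3
    have hlp := hlampos n
    have hμ : 0 < lam n ^ (1 / p) := Real.rpow_pos_of_pos hlp _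
    have h1I : x n 1 ∈ Icc (0:ℝ) 1 := hxmem n 1 le_rfl (by omega)
    have h2I : x n (n - 1) ∈ Icc (0:ℝ) 1 := hxmem n (n - 1) (by omega) le_rfl
    have hph := hphase n (x n 1) h1I (x n (n - 1)) h2I
    have hnode1 := hxnode n 1 le_rfl (by omega)
    have hnode2 := hxnode n (n - 1) (by omega) le_rfl
    have hcomp : IntegrableOn (fun t => 1 + |q t| / lam n) (Set.Ioc (0:ℝ) 1) :=
      (integrableOn_const measure_Ioc_lt_top.ne).add (hqIoc.div_const _)
    have hb1 : |θ n (x n (n - 1)) - θ n (x n 1)| ≤ 1 + K / lam n := by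
      rw [hph]
      have step1 : |∫ t in (x n 1)..(x n (n - 1)),
          (1 - q t / lam n * |S (lam n ^ (1 / p) * θ n t)| ^ p)|
          ≤ ∫ t in Set.uIoc (x n 1) (x n (n - 1)),
            |1 - q t / lam n * |S (lam n ^ (1 / p) * θ n t)| ^ p| := by
        have := intervalIntegral.norm_integral_le_integral_norm_uIoc
          (f := fun t => 1 - q t / lam n * |S (lam n ^ (1 / p) * θ n t)| ^ p)
          (a := x n 1) (b := x n (n - 1)) (μ := volume)
        simpa [Real.norm_eq_abs] using this
      have hsubset : Set.uIoc (x n 1) (x n (n - 1)) ⊆ Set.Ioc (0:ℝ) 1 := by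
        rw [Set.uIoc]
        exact Ioc_subset_Ioc (le_min h1I.1 h2I.1) (max_le h1I.2 h2I.2)
      have step2 : ∫ t in Set.uIoc (x n 1) (x n (n - 1)),
            |1 - q t / lam n * |S (lam n ^ (1 / p) * θ n t)| ^ p|
          ≤ ∫ t in Set.Ioc (0:ℝ) 1,
            |1 - q t / lam n * |S (lam n ^ (1 / p) * θ n t)| ^ p| :=
        setIntegral_mono_set (hgint n).abs (ae_of_all _ fun t => abs_nonneg _)
          (HasSubset.Subset.eventuallyLE hsubset)
      have step3 : ∫ t in Set.Ioc (0:ℝ) 1,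
            |1 - q t / lam n * |S (lam n ^ (1 / p) * θ n t)| ^ p|
          ≤ ∫ t in Set.Ioc (0:ℝ) 1, (1 + |q t| / lam n) :=
        setIntegral_mono_on (hgint n).abs hcomp measurableSet_Ioc fun t _ => hdom n t
      have step4 : ∫ t in Set.Ioc (0:ℝ) 1, (1 + |q t| / lam n) = 1 + K / lam n := by
        rw [MeasureTheory.integral_add (integrableOn_const (C := (1:ℝ)) measure_Ioc_lt_top.ne)
          (hqIoc.div_const _)]
        rw [setIntegral_const, MeasureTheory.integral_div, ← hKdef]
        simp [Real.volume_Ioc]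
      linarith [step1, step2, step3, le_of_eq step4]
    have hcast : ((n - 1 : ℕ) : ℝ) = (n : ℝ) - 1 := by
      have : 1 ≤ n := by omega
      push_cast [Nat.cast_sub this]
      ring
    have hdiff : θ n (x n (n - 1)) - θ n (x n 1)
        = ((n:ℝ) - 2) * pihat p / lam n ^ (1 / p) := by
      rw [hnode1, hnode2, hcast]
      push_cast
      ring
    have h2 : ((n:ℝ) - 2) * pihat p / lam n ^ (1 / p) ≤ 1 + K / lam n := by
      rw [← hdiff]; exact le_trans (le_abs_self _) hb1
    rw [div_le_iff₀ hμ] at h2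
    linarith [h2]
  constructor
  · exact ⟨K, hmain⟩
  · intro ε hε
    have hπ4 : (0:ℝ) < (pihat p / 4) ^ p := Real.rpow_pos_of_pos (by positivity) _
    set D := K / (ε * (pihat p / 4) ^ p) with hD
    have hE1 : ∀ᶠ n : ℕ in atTop, K ≤ lam n := hlamtop.eventually_ge_atTop K
    have hE2 : ∀ᶠ n : ℕ in atTop, D ≤ (n:ℝ) ^ (p - 1) := by
      have h1 : Tendsto (fun n : ℕ => ((n:ℝ)) ^ (p - 1)) atTop atTop :=
        (tendsto_rpow_atTop (by linarith)).comp tendsto_natCast_atTop_atTop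
      exact h1.eventually_ge_atTop D
    have hE3 : ∀ᶠ n : ℕ in atTop, 4 ≤ n := eventually_ge_atTop 4
    obtain ⟨N, hN⟩ := Filter.eventually_atTop.mp ((hE1.and hE2).and hE3)
    refine ⟨N, fun n hn k hk1 hk2 => ?_⟩
    obtain ⟨⟨hKlam, hDn⟩, hn4⟩ := hN n hn
    have hn3 : 3 ≤ n := by omega
    have hlp := hlampos n
    have hμ : 0 < lam n ^ (1 / p) := Real.rpow_pos_of_pos hlp _
    have hn0R : (0:ℝ) < (n:ℝ) := by
      have : (0:ℕ) < n := by omega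
      exact_mod_cast this
    have hn4R : (4:ℝ) ≤ (n:ℝ) := by exact_mod_cast hn4
    have h1 := hgap n hn3
    have h2 : 1 + K / lam n ≤ 2 := by
      have : K / lam n ≤ 1 := (div_le_one hlp).mpr hKlam
      linarith
    have hn2 : (0:ℝ) < (n:ℝ) - 2 := by linarith
    have hμge : ((n:ℝ) - 2) * pihat p / 2 ≤ lam n ^ (1 / p) := by
      nlinarith [h1, h2, hμ, mul_le_mul_of_nonneg_left h2 hμ.le]
    have hlameq : lam n = (lam n ^ (1 / p)) ^ p := by
      rw [← Real.rpow_mul hlp.le, one_div_mul_cancel (ne_of_gt hp0), Real.rpow_one]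
    have hlow : ((n:ℝ)) ^ p * (pihat p / 4) ^ p ≤ lam n := by
      have e1 : (n:ℝ) * (pihat p / 4) ≤ ((n:ℝ) - 2) * pihat p / 2 := by nlinarith
      calc ((n:ℝ)) ^ p * (pihat p / 4) ^ p = ((n:ℝ) * (pihat p / 4)) ^ p := by
            rw [← Real.mul_rpow hn0R.le (by positivity)]
        _ ≤ (lam n ^ (1 / p)) ^ p := by
            apply Real.rpow_le_rpow (by positivity) ?_ hp0.le
            linarith
        _ = lam n := hlameq.symm
    have e3 : (n:ℝ) ^ (p - 1) * (n:ℝ) = (n:ℝ) ^ p := by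
      rw [Real.rpow_sub hn0R, Real.rpow_one]
      field_simp
    have hKn : K * n ≤ ε * lam n := by
      have e4 : K = ε * (pihat p / 4) ^ p * D := by
        rw [hD]
        field_simp
      calc K * n = (ε * (pihat p / 4) ^ p * D) * n := by rw [← e4]
        _ ≤ (ε * (pihat p / 4) ^ p * (n:ℝ) ^ (p - 1)) * n := by
            apply mul_le_mul_of_nonneg_right ?_ hn0R.le
            apply mul_le_mul_of_nonneg_left hDn (by positivity)
        _ = ε * (((n:ℝ) ^ (p - 1) * (n:ℝ)) * (pihat p / 4) ^ p) := by ring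
        _ = ε * ((n:ℝ) ^ p * (pihat p / 4) ^ p) := by rw [e3]
        _ ≤ ε * lam n := mul_le_mul_of_nonneg_left hlow hε.le
    have hfin : K / lam n ≤ ε / n := by
      rw [div_le_div_iff₀ hlp hn0R]
      linarith [hKn]
    exact le_trans (hmain n k hk1 hk2) hfin
end
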